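/- Let N = {1,…,2n} carry a coloring with exactly n black and n white nodes, and let T be the set of nodes that are either odd and white or even and black. Let π be an odd-even pairing and ρ a black-white pairing of N. Then the number of subsets S ⊆ N satisfying ρ(S) = S and π(S △ T) = S △ T equals 2^{(number of components of π ∪ ρ)} (here △ denotes symmetric difference); moreover every such S is balanced. -/

import Mathlib

namespace DD

/-- The node set `{1, …, 2n}`. -/
def nodes (n : ℕ) : Finset ℕ := Finset.Icc 1 (2 * n)

/-- `ρ` is a pairing of `{1,…,2n}`: a fixed-point-free involution of the node set. -/
structure IsPairing (n : ℕ) (ρ : ℕ → ℕ) : Prop where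
  maps : ∀ i ∈ nodes n, ρ i ∈ nodes n
  invol : ∀ i ∈ nodes n, ρ (ρ i) = i
  nofix : ∀ i ∈ nodes n, ρ i ≠ i

/-- Number of crossings of `ρ` among pairs of `ρ` contained in `A`:
a crossing is a pair of pairs `(a,c)`, `(b,d)` of `ρ` with `a < b < c < d`. -/
def numCrossingsOn (A : Finset ℕ) (ρ : ℕ → ℕ) : ℕ :=
  ((A ×ˢ A).filter (fun p => p.1 < p.2 ∧ p.2 < ρ p.1 ∧ ρ p.1 < ρ p.2)).card

/-- Number of crossings of a pairing of `{1,…,2n}`. -/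
def numCrossings (n : ℕ) (ρ : ℕ → ℕ) : ℕ := numCrossingsOn (nodes n) ρ

/-- A pairing is planar if it has no crossings. -/
def IsPlanar (n : ℕ) (ρ : ℕ → ℕ) : Prop := numCrossings n ρ = 0

/-- A coloring `c : ℕ → Bool` of the nodes: `true` = black, `false` = white.
A black-white pairing pairs each black node with a white node. -/
def IsBW (n : ℕ) (c : ℕ → Bool) (ρ : ℕ → ℕ) : Prop :=
  ∀ i ∈ nodes n, c (ρ i) = !(c i)

/-- An odd-even pairing pairs each odd node with an even node. -/
def IsOE (n : ℕ) (ρ : ℕ → ℕ) : Prop :=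
  ∀ i ∈ nodes n, ρ i % 2 ≠ i % 2

/-- The coloring has exactly `n` black (hence exactly `n` white) nodes. -/
def BalancedColoring (n : ℕ) (c : ℕ → Bool) : Prop :=
  ((nodes n).filter (fun i => c i = true)).card = n

/-- The black nodes. -/
def blacks (n : ℕ) (c : ℕ → Bool) : Finset ℕ := (nodes n).filter (fun i => c i = true)

/-- The white nodes. -/
def whites (n : ℕ) (c : ℕ → Bool) : Finset ℕ := (nodes n).filter (fun i => c i = false)

/-- `sign_BW(ρ)`: the sign of the permutation sending `i` to the rank of `w_i = ρ(b_i)`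
among the white nodes, computed as `(-1)` to the number of inversions, i.e. the number of
pairs of black nodes `b < b'` with `ρ b > ρ b'`. -/
def signBW (n : ℕ) (c : ℕ → Bool) (ρ : ℕ → ℕ) : ℤ :=
  (-1 : ℤ) ^ (((nodes n ×ˢ nodes n).filter
    (fun p => c p.1 = true ∧ c p.2 = true ∧ p.1 < p.2 ∧ ρ p.2 < ρ p.1)).card)

/-- `sign_OE(π)`: the sign of the permutation sending `i` to `π(2i−1)/2`, computed as
`(-1)` to the number of pairs of odd nodes `a < b` with `π a > π b`. -/
def signOE (n : ℕ) (π : ℕ → ℕ) : ℤ :=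
  (-1 : ℤ) ^ (((nodes n ×ˢ nodes n).filter
    (fun p => p.1 % 2 = 1 ∧ p.2 % 2 = 1 ∧ p.1 < p.2 ∧ π p.2 < π p.1)).card)

/-- `a_{b,w}`: the number of indices `i` with `min b w ≤ i < max b w` such that nodes `i`
and `i+1` have the same color. -/
def aCount (c : ℕ → Bool) (b w : ℕ) : ℕ :=
  ((Finset.Ico (min b w) (max b w)).filter (fun i => c i = c (i + 1))).card

/-- `sign(b,w) = (−1)^{(|b−w| + a_{b,w} − 1)/2}` for a black node `b` and white node `w`. -/
def pairSign (c : ℕ → Bool) (b w : ℕ) : ℤ :=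
  (-1 : ℤ) ^ ((max b w - min b w + aCount c b w - 1) / 2)

/-- Cyclic successor of node `m` in `{1,…,2n}`. -/
def nextNode (n m : ℕ) : ℕ := if m = 2 * n then 1 else m + 1

/-- Couples of consecutive nodes of the same color, cyclically: indices `m ∈ {1,…,2n}`
with nodes `m` and `m+1` (cyclically) of the same color. -/
def couples (n : ℕ) (c : ℕ → Bool) : Finset ℕ :=
  (nodes n).filter (fun m => c m = c (nextNode n m))

/-- The value `φ(m)` for a couple `m`: writing `r` for the rank of `m` among couples of its
own color, `φ(m) = 2r` if `m` has the same color as node `1`, and `φ(m) = 2r − 1` otherwise. -/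
def phiCouple (n : ℕ) (c : ℕ → Bool) (m : ℕ) : ℕ :=
  if c m = c 1 then 2 * ((couples n c).filter (fun m' => c m' = c m ∧ m' ≤ m)).card
  else 2 * ((couples n c).filter (fun m' => c m' = c m ∧ m' ≤ m)).card - 1

/-- `sign_cons(N)`: the sign of the one-line permutation `(φ(n₁),…,φ(n_{2k}))`, computed
as `(-1)` to its number of inversions. -/
def signCons (n : ℕ) (c : ℕ → Bool) : ℤ :=
  (-1 : ℤ) ^ (((couples n c ×ˢ couples n c).filter
    (fun p => p.1 < p.2 ∧ phiCouple n c p.2 < phiCouple n c p.1)).card)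

/-- The set `T` of nodes that are odd and white, or even and black. -/
def Tset (n : ℕ) (c : ℕ → Bool) : Finset ℕ :=
  (nodes n).filter (fun i => (i % 2 = 1 ∧ c i = false) ∨ (i % 2 = 0 ∧ c i = true))

/-- A subset is balanced if it contains equally many black and white nodes. -/
def BalancedSubset (c : ℕ → Bool) (S : Finset ℕ) : Prop :=
  (S.filter (fun i => c i = true)).card = (S.filter (fun i => c i = false)).card

/-- `ρ` does not connect `S` to its complement: `ρ(S) = S`. -/
def Invariant (S : Finset ℕ) (ρ : ℕ → ℕ) : Prop := ∀ i ∈ S, ρ i ∈ S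

/-- Reachability under the subgroup generated by the involutions `π` and `ρ`. -/
def compRel (n : ℕ) (π ρ : ℕ → ℕ) (a b : ℕ) : Prop :=
  Relation.ReflTransGen (fun u v => u ∈ nodes n ∧ (v = π u ∨ v = ρ u)) a b

open scoped Classical in
/-- The number of components (orbits) of `π ∪ ρ` on the node set. -/
noncomputable def numComponents (n : ℕ) (π ρ : ℕ → ℕ) : ℕ :=
  ((nodes n).image (fun a => (nodes n).filter (fun b => compRel n π ρ a b))).card


section Words
variable {n : ℕ} {π ρ : ℕ → ℕ}

/-- apply one step -/
def stepf (π ρ : ℕ → ℕ) (s : Bool) (x : ℕ) : ℕ := if s then π x else ρ x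

/-- apply a word of steps (head applied last) -/
def aw (π ρ : ℕ → ℕ) (L : List Bool) (a : ℕ) : ℕ :=
  L.foldr (fun s x => stepf π ρ s x) a

variable (hπ : IsPairing n π) (hρ : IsPairing n ρ)
include hπ hρ

lemma stepf_mem {a : ℕ} (ha : a ∈ nodes n) (s : Bool) : stepf π ρ s a ∈ nodes n := by
  cases s <;> simp [stepf] <;> [exact hρ.maps a ha; exact hπ.maps a ha]

lemma stepf_invol {a : ℕ} (ha : a ∈ nodes n) (s : Bool) : stepf π ρ s (stepf π ρ s a) = a := by
  cases s <;> simp [stepf] <;> [exact hρ.invol a ha; exact hπ.invol a ha]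

lemma stepf_nofix {a : ℕ} (ha : a ∈ nodes n) (s : Bool) : stepf π ρ s a ≠ a := by
  cases s <;> simp [stepf] <;> [exact hρ.nofix a ha; exact hπ.nofix a ha]

omit hπ hρ

lemma aw_nil (a : ℕ) : aw π ρ [] a = a := rfl

lemma aw_cons (s : Bool) (L : List Bool) (a : ℕ) :
    aw π ρ (s :: L) a = stepf π ρ s (aw π ρ L a) := rfl

lemma aw_append (L₁ L₂ : List Bool) (a : ℕ) :
    aw π ρ (L₁ ++ L₂) a = aw π ρ L₁ (aw π ρ L₂ a) := by
  simp [aw, List.foldr_append]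

include hπ hρ

lemma aw_mem {a : ℕ} (ha : a ∈ nodes n) (L : List Bool) : aw π ρ L a ∈ nodes n := by
  induction L with
  | nil => exact ha
  | cons s L ih => exact stepf_mem hπ hρ ih s

lemma aw_reverse {a : ℕ} (ha : a ∈ nodes n) (L : List Bool) :
    aw π ρ L.reverse (aw π ρ L a) = a := by
  induction L with
  | nil => rfl
  | cons s L ih =>
    rw [List.reverse_cons, aw_append]
    show aw π ρ L.reverse (stepf π ρ s (stepf π ρ s (aw π ρ L a))) = a
    rw [stepf_invol hπ hρ (aw_mem hπ hρ ha L) s]; exact ih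

end Words

section AltWords
variable {n : ℕ} {π ρ : ℕ → ℕ}

/-- alternating word -/
def altW : Bool → ℕ → List Bool
  | _, 0 => []
  | s, (k+1) => s :: altW (!s) k

lemma altW_length (s : Bool) (k : ℕ) : (altW s k).length = k := by
  induction k generalizing s with
  | zero => rfl
  | succ k ih => simp [altW, ih]

lemma chain_or_dup (L : List Bool) :
    List.Chain' (· ≠ ·) L ∨ ∃ X s Y, L = X ++ s :: s :: Y := by
  induction L with
  | nil => left; exact List.isChain_nil
  | cons s L ih =>
    cases L with
    | nil => left; exact List.isChain_singleton s
    | cons t L' =>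
      by_cases hst : s = t
      · right; exact ⟨[], t, L', by rw [hst]; rfl⟩
      · rcases ih with hch | ⟨X, u, Y, hXY⟩
        · left; exact List.isChain_cons_cons.mpr ⟨hst, hch⟩
        · right; exact ⟨s :: X, u, Y, by rw [hXY]; rfl⟩

lemma chain_alt : ∀ (L : List Bool) (s : Bool), List.Chain' (· ≠ ·) (s :: L) →
    s :: L = altW s (L.length + 1) := by
  intro L
  induction L with
  | nil => intro s _; rfl
  | cons t L' ih =>
    intro s h
    replace h := List.isChain_cons_cons.mp h
    have ht : t = !s := by cases s <;> cases t <;> simp_all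
    have := ih t h.2
    show s :: t :: L' = altW s (L'.length + 1 + 1)
    show s :: t :: L' = s :: altW (!s) (L'.length + 1)
    rw [← ht, ← this]

lemma altW_even_last (k : ℕ) (s : Bool) : ∃ M, altW s (2 * (k + 1)) = M ++ [!s] := by
  induction k generalizing s with
  | zero => exact ⟨[s], rfl⟩
  | succ k ih =>
    obtain ⟨M, hM⟩ := ih s
    refine ⟨s :: (!s) :: M, ?_⟩
    have h2 : altW s (2 * (k + 2)) = s :: (!s) :: altW s (2 * (k + 1)) := by
      show altW s (2 * (k + 1) + 2) = _
      show s :: altW (!s) (2 * (k + 1) + 1) = _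
      show s :: (!s) :: altW (!!s) (2 * (k + 1)) = _
      rw [Bool.not_not]
    rw [h2, hM]; rfl

lemma no_odd_loop (hπ : IsPairing n π) (hρ : IsPairing n ρ) :
    ∀ (m : ℕ) (L : List Bool) (a : ℕ), L.length = m → a ∈ nodes n → aw π ρ L a = a →
      Even m := by
  intro m
  induction m using Nat.strong_induction_on with
  | _ m IH =>
  intro L a hlen ha hfix
  rcases chain_or_dup L with hch | ⟨X, s, Y, rfl⟩
  · cases L with
    | nil => exact ⟨0, by simp at hlen; omega⟩
    | cons s L' =>
      rcases Nat.even_or_odd m with he | ho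
      · exact he
      · exfalso
        obtain ⟨k, hk⟩ := ho
        have hL : s :: L' = altW s (L'.length + 1) := chain_alt _ _ hch
        have hlen' : L'.length = 2 * k := by simp at hlen; omega
        rcases Nat.eq_zero_or_pos k with rfl | hkpos
        · -- L = [s]
          have : L' = [] := List.eq_nil_of_length_eq_zero (by omega)
          subst this
          exact stepf_nofix hπ hρ ha s hfix
        · -- L' = altW (!s) (2k) = M ++ [s]
          obtain ⟨M, hM⟩ := altW_even_last (k - 1) (!s)
          have h2k : 2 * (k - 1 + 1) = 2 * k := by omega
          rw [h2k, Bool.not_not] at hM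
          have hMlen : M.length + 1 = 2 * k := by
            have := altW_length (!s) (2 * k)
            rw [hM] at this; simp at this; omega
          have hL2 : s :: L' = s :: altW (!s) L'.length := hL
          have hL'' : L' = M ++ [s] := by
            have h := hL2
            rw [hlen', hM] at h
            injection h
          set b := stepf π ρ s a with hbdef
          have hb : b ∈ nodes n := stepf_mem hπ hρ ha s
          have h4 : aw π ρ L' a = b := by
            rw [aw_cons] at hfix
            have h := congrArg (stepf π ρ s) hfix
            rw [stepf_invol hπ hρ (aw_mem hπ hρ ha L') s] at h
            rw [h, hbdef]
          have hsb : stepf π ρ s b = a := by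
            rw [hbdef]; exact stepf_invol hπ hρ ha s
          have h5 : aw π ρ M b = b := by
            have e1 : aw π ρ (L' ++ [s]) b = b := by
              rw [aw_append]
              show aw π ρ L' (stepf π ρ s b) = b
              rw [hsb, h4]
            have e2 : L' ++ [s] = M ++ [s] ++ [s] := by rw [hL'']
            rw [e2, aw_append, aw_append] at e1
            show aw π ρ M b = b
            rw [show aw π ρ [s] b = stepf π ρ s b from rfl, hsb,
              show aw π ρ [s] a = stepf π ρ s a from rfl, ← hbdef] at e1
            exact e1
          have hlt : M.length < m := by omega
          have := IH M.length hlt M b rfl hb h5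
          obtain ⟨t, ht⟩ := this
          omega
  · -- dup cancellation
    have hx : aw π ρ (X ++ s :: s :: Y) a = aw π ρ (X ++ Y) a := by
      rw [aw_append, aw_append, aw_cons, aw_cons,
        stepf_invol hπ hρ (aw_mem hπ hρ ha Y) s]
    have hlen2 : (X ++ Y).length = m - 2 := by simp at hlen ⊢; omega
    have hm2 : m - 2 < m := by simp at hlen; omega
    have := IH (m - 2) hm2 (X ++ Y) a hlen2 ha (by rw [← hx]; exact hfix)
    simp at hlen
    obtain ⟨t, ht⟩ := this
    exact ⟨t + 1, by omega⟩
end AltWords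

section C
variable {n : ℕ} {π ρ : ℕ → ℕ}

variable (hπ : IsPairing n π) (hρ : IsPairing n ρ)
include hπ hρ

lemma parity_unique {a b : ℕ} (ha : a ∈ nodes n) {L₁ L₂ : List Bool}
    (h1 : aw π ρ L₁ a = b) (h2 : aw π ρ L₂ a = b) :
    (Even L₁.length ↔ Even L₂.length) := by
  have hloop : aw π ρ (L₂.reverse ++ L₁) a = a := by
    rw [aw_append, h1, ← h2]
    exact aw_reverse hπ hρ ha L₂
  have := no_odd_loop hπ hρ _ _ a rfl ha hloop
  simp only [List.length_append, List.length_reverse] at this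
  rw [Nat.even_add] at this
  tauto

omit hπ hρ

/-- even-length reachability -/
def Ev (π ρ : ℕ → ℕ) (a b : ℕ) : Prop := ∃ L : List Bool, aw π ρ L a = b ∧ Even L.length

lemma path_of_rel {a b : ℕ} (h : compRel n π ρ a b) : ∃ L, aw π ρ L a = b := by
  induction h with
  | refl => exact ⟨[], rfl⟩
  | tail h1 h2 ih =>
    obtain ⟨L, hL⟩ := ih
    rcases h2.2 with h | h
    · exact ⟨true :: L, by rw [aw_cons, hL]; exact h.symm⟩
    · exact ⟨false :: L, by rw [aw_cons, hL]; exact h.symm⟩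

include hπ hρ

lemma compRel_symm {a b : ℕ} (h : compRel n π ρ a b) : compRel n π ρ b a := by
  refine @Std.Symm.symm _ _ (@Relation.ReflTransGen.stdSymm _ _ ⟨?_⟩) _ _ h
  rintro u v ⟨hu, hv | hv⟩
  · subst hv; exact ⟨hπ.maps u hu, Or.inl (hπ.invol u hu).symm⟩
  · subst hv; exact ⟨hρ.maps u hu, Or.inr (hρ.invol u hu).symm⟩

lemma compRel_mem {a b : ℕ} (ha : a ∈ nodes n) (h : compRel n π ρ a b) : b ∈ nodes n := by
  induction h with
  | refl => exact ha
  | tail h1 h2 ih =>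
    rcases h2.2 with h | h
    · subst h; exact hπ.maps _ h2.1
    · subst h; exact hρ.maps _ h2.1

omit hπ hρ

open scoped Classical

/-- the component of a node -/
noncomputable def compF (n : ℕ) (π ρ : ℕ → ℕ) (a : ℕ) : Finset ℕ :=
  (nodes n).filter (fun b => compRel n π ρ a b)

lemma mem_compF {a b : ℕ} : b ∈ compF n π ρ a ↔ b ∈ nodes n ∧ compRel n π ρ a b :=
  Finset.mem_filter

lemma self_mem_compF {a : ℕ} (ha : a ∈ nodes n) : a ∈ compF n π ρ a :=
  mem_compF.mpr ⟨ha, Relation.ReflTransGen.refl⟩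

include hπ hρ

lemma compF_eq {a b : ℕ} (ha : a ∈ nodes n) (h : compRel n π ρ a b) :
    compF n π ρ a = compF n π ρ b := by
  ext x
  simp only [mem_compF]
  constructor
  · rintro ⟨hx, hax⟩
    exact ⟨hx, Relation.ReflTransGen.trans (compRel_symm hπ hρ h) hax⟩
  · rintro ⟨hx, hbx⟩
    exact ⟨hx, Relation.ReflTransGen.trans h hbx⟩

omit hπ hρ

/-- representative of the component of a node -/
noncomputable def repF (n : ℕ) (π ρ : ℕ → ℕ) (a : ℕ) : ℕ := (compF n π ρ a).min.getD 0

lemma repF_mem {a : ℕ} (ha : a ∈ nodes n) : repF n π ρ a ∈ compF n π ρ a := by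
  obtain ⟨m, hm⟩ := Finset.min_of_nonempty ⟨a, self_mem_compF ha⟩
  have : repF n π ρ a = m := by rw [repF, hm]; rfl
  rw [this]
  exact Finset.mem_of_min hm

include hπ hρ

lemma repF_mem_nodes {a : ℕ} (ha : a ∈ nodes n) : repF n π ρ a ∈ nodes n :=
  (mem_compF.mp (repF_mem ha)).1

lemma repF_rel {a : ℕ} (ha : a ∈ nodes n) : compRel n π ρ (repF n π ρ a) a :=
  compRel_symm hπ hρ (mem_compF.mp (repF_mem ha)).2

lemma ev_step {r i : ℕ} (hr : r ∈ nodes n) (h : compRel n π ρ r i) (s : Bool) :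
    Ev π ρ r (stepf π ρ s i) ↔ ¬ Ev π ρ r i := by
  obtain ⟨L, hL⟩ := path_of_rel h
  have h1 : Ev π ρ r i ↔ Even L.length := by
    constructor
    · rintro ⟨L', hL', he⟩
      exact (parity_unique hπ hρ hr hL' hL).mp he
    · exact fun he => ⟨L, hL, he⟩
  have hsL : aw π ρ (s :: L) r = stepf π ρ s i := by rw [aw_cons, hL]
  have h2 : Ev π ρ r (stepf π ρ s i) ↔ Even (s :: L).length := by
    constructor
    · rintro ⟨L', hL', he⟩
      exact (parity_unique hπ hρ hr hL' hsL).mp he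
    · exact fun he => ⟨s :: L, hsL, he⟩
  rw [h1, h2, List.length_cons, Nat.even_add_one]

/-- the parity indicator -/
noncomputable def GF (n : ℕ) (π ρ : ℕ → ℕ) (i : ℕ) : Prop :=
  Ev π ρ (repF n π ρ i) i

lemma stepf_rel {i : ℕ} (hi : i ∈ nodes n) (s : Bool) : compRel n π ρ i (stepf π ρ s i) := by
  refine Relation.ReflTransGen.single ⟨hi, ?_⟩
  cases s
  · exact Or.inr rfl
  · exact Or.inl rfl

lemma compF_stepf {i : ℕ} (hi : i ∈ nodes n) (s : Bool) :
    compF n π ρ (stepf π ρ s i) = compF n π ρ i :=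
  (compF_eq hπ hρ hi (stepf_rel hπ hρ hi s)).symm

lemma GF_step {i : ℕ} (hi : i ∈ nodes n) (s : Bool) :
    GF n π ρ (stepf π ρ s i) ↔ ¬ GF n π ρ i := by
  have hrep : repF n π ρ (stepf π ρ s i) = repF n π ρ i := by
    rw [repF, repF, compF_stepf hπ hρ hi]
  rw [GF, GF, hrep]
  exact ev_step hπ hρ (repF_mem_nodes hπ hρ hi) (repF_rel hπ hρ hi) s

lemma GF_rep {a : ℕ} (ha : a ∈ nodes n) : GF n π ρ (repF n π ρ a) := by
  have h1 : compF n π ρ (repF n π ρ a) = compF n π ρ a :=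
    (compF_eq hπ hρ ha (mem_compF.mp (repF_mem ha)).2).symm
  have h2 : repF n π ρ (repF n π ρ a) = repF n π ρ a := by
    show (compF n π ρ (repF n π ρ a)).min.getD 0 = _
    rw [h1]; rfl
  rw [GF, h2]
  exact ⟨[], rfl, Even.zero⟩

/-- values along a path in an alternating set -/
lemma alt_path {U : Finset ℕ}
    (hU : ∀ i ∈ nodes n, ((π i ∈ U) ↔ ¬ i ∈ U) ∧ ((ρ i ∈ U) ↔ ¬ i ∈ U))
    {a : ℕ} (ha : a ∈ nodes n) (L : List Bool) :
    (a ∈ U ↔ (aw π ρ L a ∈ U ↔ Even L.length)) := by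
  induction L with
  | nil => rw [show aw π ρ [] a = a from rfl]; simp
  | cons s L ih =>
    have hx : aw π ρ L a ∈ nodes n := aw_mem hπ hρ ha L
    have hstep : stepf π ρ s (aw π ρ L a) ∈ U ↔ ¬ (aw π ρ L a ∈ U) := by
      cases s
      · exact (hU _ hx).2
      · exact (hU _ hx).1
    rw [aw_cons, hstep, List.length_cons, Nat.even_add_one]
    tauto

end C

section Counting
variable {n : ℕ} {π ρ : ℕ → ℕ} {c : ℕ → Bool}
open scoped Classical

lemma numComp_eq : ((nodes n).image (compF n π ρ)).card = numComponents n π ρ := rfl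

lemma GF_iff_even (hπ : IsPairing n π) (hρ : IsPairing n ρ) {i : ℕ} (hi : i ∈ nodes n)
    {L : List Bool} (hL : aw π ρ L (repF n π ρ i) = i) : (GF n π ρ i ↔ Even L.length) := by
  constructor
  · rintro ⟨L', hL', he⟩
    exact (parity_unique hπ hρ (repF_mem_nodes hπ hρ hi) hL' hL).mp he
  · exact fun he => ⟨L, hL, he⟩

/-- The count of alternating subsets equals 2^(number of components). -/
lemma count_alt (hπ : IsPairing n π) (hρ : IsPairing n ρ) :
    (((nodes n).powerset).filter (fun U => ∀ i ∈ nodes n,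
        ((π i ∈ U) ↔ ¬ i ∈ U) ∧ ((ρ i ∈ U) ↔ ¬ i ∈ U))).card
      = 2 ^ numComponents n π ρ := by
  rw [← numComp_eq, ← Finset.card_powerset]
  apply Finset.card_bij'
    (i := fun U _ => ((nodes n).image (compF n π ρ)).filter (fun K => K.min.getD 0 ∈ U))
    (j := fun A _ => (nodes n).filter (fun i => GF n π ρ i ↔ compF n π ρ i ∈ A))
  · -- hi : image lands in powerset of comps
    intro U hU
    exact Finset.mem_powerset.mpr (Finset.filter_subset _ _)
  · -- hj : lands in the alternating set
    intro A hA
    simp only [Finset.mem_filter, Finset.mem_powerset]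
    refine ⟨Finset.filter_subset _ _, ?_⟩
    intro i hi
    have hπi : π i ∈ nodes n := hπ.maps i hi
    have hρi : ρ i ∈ nodes n := hρ.maps i hi
    have g1 : GF n π ρ (π i) ↔ ¬ GF n π ρ i := GF_step hπ hρ hi true
    have g2 : GF n π ρ (ρ i) ↔ ¬ GF n π ρ i := GF_step hπ hρ hi false
    have c1 : compF n π ρ (π i) = compF n π ρ i := compF_stepf hπ hρ hi true
    have c2 : compF n π ρ (ρ i) = compF n π ρ i := compF_stepf hπ hρ hi false
    simp only [Finset.mem_filter, hπi, hρi, hi, true_and, c1, c2, g1, g2]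
    constructor <;> tauto
  · -- left inverse : Ψ (Φ U) = U
    intro U hU
    simp only [Finset.mem_filter, Finset.mem_powerset] at hU
    obtain ⟨hUV, hUalt⟩ := hU
    ext i
    rw [Finset.mem_filter]
    constructor
    · rintro ⟨hi, hiff⟩
      rw [Finset.mem_filter] at hiff
      have hcomp : compF n π ρ i ∈ (nodes n).image (compF n π ρ) :=
        Finset.mem_image.mpr ⟨i, hi, rfl⟩
      have hrepmin : (compF n π ρ i).min.getD 0 = repF n π ρ i := rfl
      obtain ⟨L, hL⟩ := path_of_rel (repF_rel hπ hρ hi)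
      have h1 := alt_path hπ hρ hUalt (repF_mem_nodes hπ hρ hi) L
      rw [hL] at h1
      have h2 := GF_iff_even hπ hρ hi hL
      simp only [hcomp, true_and, hrepmin] at hiff
      tauto
    · intro hiU
      have hi : i ∈ nodes n := hUV hiU
      refine ⟨hi, ?_⟩
      rw [Finset.mem_filter]
      have hcomp : compF n π ρ i ∈ (nodes n).image (compF n π ρ) :=
        Finset.mem_image.mpr ⟨i, hi, rfl⟩
      have hrepmin : (compF n π ρ i).min.getD 0 = repF n π ρ i := rfl
      obtain ⟨L, hL⟩ := path_of_rel (repF_rel hπ hρ hi)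
      have h1 := alt_path hπ hρ hUalt (repF_mem_nodes hπ hρ hi) L
      rw [hL] at h1
      have h2 := GF_iff_even hπ hρ hi hL
      simp only [hcomp, true_and, hrepmin]
      tauto
  · -- right inverse : Φ (Ψ A) = A
    intro A hA
    rw [Finset.mem_powerset] at hA
    ext K
    rw [Finset.mem_filter]
    constructor
    · rintro ⟨hK, hrK⟩
      obtain ⟨a, ha, rfl⟩ := Finset.mem_image.mp hK
      rw [Finset.mem_filter] at hrK
      have hrepmin : (compF n π ρ a).min.getD 0 = repF n π ρ a := rfl
      rw [hrepmin] at hrK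
      have hGr : GF n π ρ (repF n π ρ a) := GF_rep hπ hρ ha
      have hcr : compF n π ρ (repF n π ρ a) = compF n π ρ a :=
        (compF_eq hπ hρ ha (mem_compF.mp (repF_mem ha)).2).symm
      rw [hcr] at hrK
      tauto
    · intro hKA
      have hK : K ∈ (nodes n).image (compF n π ρ) := hA hKA
      refine ⟨hK, ?_⟩
      obtain ⟨a, ha, rfl⟩ := Finset.mem_image.mp hK
      have hrepmin : (compF n π ρ a).min.getD 0 = repF n π ρ a := rfl
      rw [hrepmin]
      simp only [Finset.mem_filter]
      refine ⟨repF_mem_nodes hπ hρ ha, ?_⟩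
      have hcr : compF n π ρ (repF n π ρ a) = compF n π ρ a :=
        (compF_eq hπ hρ ha (mem_compF.mp (repF_mem ha)).2).symm
      rw [hcr]
      exact iff_of_true (GF_rep hπ hρ ha) hKA

lemma mem_symmDiff_iff {X Y : Finset ℕ} {i : ℕ} : i ∈ symmDiff X Y ↔ (i ∈ X ↔ i ∉ Y) := by
  rw [Finset.mem_symmDiff]; tauto

lemma invariant_iff {σ : ℕ → ℕ} (hm : ∀ i ∈ nodes n, σ i ∈ nodes n)
    (hinv : ∀ i ∈ nodes n, σ (σ i) = i) {S' : Finset ℕ} (hS' : S' ⊆ nodes n) :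
    (∀ i ∈ S', σ i ∈ S') ↔ (∀ i ∈ nodes n, (σ i ∈ S' ↔ i ∈ S')) := by
  constructor
  · intro h i hi
    constructor
    · intro hσ
      have := h _ hσ
      rwa [hinv i hi] at this
    · exact h i
  · intro h i hi
    exact (h i (hS' hi)).mpr hi

/-- Translation: S satisfies the two closure conditions iff S △ blacks is alternating. -/
lemma sol_iff (hπ : IsPairing n π) (hπoe : IsOE n π) (hρ : IsPairing n ρ) (hρbw : IsBW n c ρ)
    {S : Finset ℕ} (hS : S ⊆ nodes n) :
    ((∀ i ∈ S, ρ i ∈ S) ∧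
      (∀ i ∈ symmDiff S (Tset n c), π i ∈ symmDiff S (Tset n c)))
    ↔ (∀ i ∈ nodes n,
        ((π i ∈ symmDiff S ((nodes n).filter (fun j => c j = true)) ↔
          ¬ i ∈ symmDiff S ((nodes n).filter (fun j => c j = true))) ∧
         (ρ i ∈ symmDiff S ((nodes n).filter (fun j => c j = true)) ↔
          ¬ i ∈ symmDiff S ((nodes n).filter (fun j => c j = true))))) := by
  set B := (nodes n).filter (fun j => c j = true) with hBdef
  have hTV : Tset n c ⊆ nodes n := Finset.filter_subset _ _
  have hSTV : symmDiff S (Tset n c) ⊆ nodes n := by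
    intro i hi
    rw [Finset.mem_symmDiff] at hi
    rcases hi with ⟨h1, _⟩ | ⟨h1, _⟩
    · exact hS h1
    · exact hTV h1
  rw [invariant_iff hρ.maps hρ.invol hS, invariant_iff hπ.maps hπ.invol hSTV]
  constructor
  · rintro ⟨h1, h2⟩ i hi
    constructor
    · -- π part
      have hπi : π i ∈ nodes n := hπ.maps i hi
      have hpar : π i % 2 ≠ i % 2 := hπoe i hi
      have hTi : i ∈ Tset n c ↔ ((i % 2 = 1) ↔ ¬ (c i = true)) := by
        rw [Tset, Finset.mem_filter]
        cases hci : c i <;> simp [hi, hci] <;> omega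
      have hTj : π i ∈ Tset n c ↔ ((π i % 2 = 1) ↔ ¬ (c (π i) = true)) := by
        rw [Tset, Finset.mem_filter]
        cases hcj : c (π i) <;> simp [hπi, hcj] <;> omega
      have hBi : i ∈ B ↔ c i = true := by rw [hBdef, Finset.mem_filter]; simp [hi]
      have hBj : π i ∈ B ↔ c (π i) = true := by rw [hBdef, Finset.mem_filter]; simp [hπi]
      have hoj : (π i % 2 = 1) ↔ ¬ (i % 2 = 1) := by omega
      have h2i := h2 i hi
      rw [mem_symmDiff_iff, mem_symmDiff_iff, hTi, hTj] at h2i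
      rw [mem_symmDiff_iff, mem_symmDiff_iff, hBi, hBj]
      clear h1 h2 hπ hρ hπoe hρbw hS hTV hSTV hTi hTj hBi hBj hπi hpar hi hBdef
      tauto
    · -- ρ part
      have hρi : ρ i ∈ nodes n := hρ.maps i hi
      have hcρ : c (ρ i) = true ↔ ¬ (c i = true) := by
        have := hρbw i hi
        cases hci : c i <;> simp_all
      have hBi : i ∈ B ↔ c i = true := by rw [hBdef, Finset.mem_filter]; simp [hi]
      have hBj : ρ i ∈ B ↔ c (ρ i) = true := by rw [hBdef, Finset.mem_filter]; simp [hρi]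
      have h1i := h1 i hi
      rw [mem_symmDiff_iff, mem_symmDiff_iff, hBi, hBj, hcρ]
      clear h1 h2 hπ hρ hπoe hρbw hS hTV hSTV hBi hBj hρi hcρ hi hBdef
      tauto
  · intro h
    constructor
    · -- ρ part
      intro i hi
      have hρi : ρ i ∈ nodes n := hρ.maps i hi
      have hcρ : c (ρ i) = true ↔ ¬ (c i = true) := by
        have := hρbw i hi
        cases hci : c i <;> simp_all
      have hBi : i ∈ B ↔ c i = true := by rw [hBdef, Finset.mem_filter]; simp [hi]
      have hBj : ρ i ∈ B ↔ c (ρ i) = true := by rw [hBdef, Finset.mem_filter]; simp [hρi]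
      have hhi := (h i hi).2
      rw [mem_symmDiff_iff, mem_symmDiff_iff, hBi, hBj, hcρ] at hhi
      clear h hπ hρ hπoe hρbw hS hTV hSTV hBi hBj hρi hcρ hi hBdef
      tauto
    · -- π part
      intro i hi
      have hπi : π i ∈ nodes n := hπ.maps i hi
      have hpar : π i % 2 ≠ i % 2 := hπoe i hi
      have hTi : i ∈ Tset n c ↔ ((i % 2 = 1) ↔ ¬ (c i = true)) := by
        rw [Tset, Finset.mem_filter]
        cases hci : c i <;> simp [hi, hci] <;> omega
      have hTj : π i ∈ Tset n c ↔ ((π i % 2 = 1) ↔ ¬ (c (π i) = true)) := by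
        rw [Tset, Finset.mem_filter]
        cases hcj : c (π i) <;> simp [hπi, hcj] <;> omega
      have hBi : i ∈ B ↔ c i = true := by rw [hBdef, Finset.mem_filter]; simp [hi]
      have hBj : π i ∈ B ↔ c (π i) = true := by rw [hBdef, Finset.mem_filter]; simp [hπi]
      have hoj : (π i % 2 = 1) ↔ ¬ (i % 2 = 1) := by omega
      have hhi := (h i hi).1
      rw [mem_symmDiff_iff, mem_symmDiff_iff, hBi, hBj] at hhi
      rw [mem_symmDiff_iff, mem_symmDiff_iff, hTi, hTj]
      clear h hπ hρ hπoe hρbw hS hTV hSTV hTi hTj hBi hBj hπi hpar hi hBdef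
      by_cases a1 : i ∈ S <;> by_cases a2 : π i ∈ S <;> by_cases a3 : c i = true <;>
        by_cases a4 : c (π i) = true <;> by_cases a5 : i % 2 = 1 <;> simp_all

lemma balanced_of_inv (hρ : IsPairing n ρ) (hρbw : IsBW n c ρ)
    {S : Finset ℕ} (hS : S ⊆ nodes n) (hinv : ∀ i ∈ S, ρ i ∈ S) :
    BalancedSubset c S := by
  apply Finset.card_bij' (i := fun i _ => ρ i) (j := fun j _ => ρ j)
  · intro i hi
    rw [Finset.mem_filter] at hi ⊢
    have hiV : i ∈ nodes n := hS hi.1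
    refine ⟨hinv i hi.1, ?_⟩
    rw [hρbw i hiV, hi.2]
    rfl
  · intro j hj
    rw [Finset.mem_filter] at hj ⊢
    have hjV : j ∈ nodes n := hS hj.1
    refine ⟨hinv j hj.1, ?_⟩
    rw [hρbw j hjV, hj.2]
    rfl
  · intro i hi
    rw [Finset.mem_filter] at hi
    exact hρ.invol i (hS hi.1)
  · intro j hj
    rw [Finset.mem_filter] at hj
    exact hρ.invol j (hS hj.1)

end Counting


open scoped Classical in
/-- Lemma 2.3.4: the number of subsets `S ⊆ N` with `ρ(S) = S` and
`π(S ∆ T) = S ∆ T` is `2^{#components of π ∪ ρ}`, and every such `S` is balanced. -/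
theorem statement12 (n : ℕ) (c : ℕ → Bool) (hbal : BalancedColoring n c)
    (π ρ : ℕ → ℕ) (hπ : IsPairing n π) (hπoe : IsOE n π)
    (hρ : IsPairing n ρ) (hρbw : IsBW n c ρ) :
    (((nodes n).powerset).filter (fun S =>
        (∀ i ∈ S, ρ i ∈ S) ∧
        (∀ i ∈ symmDiff S (Tset n c), π i ∈ symmDiff S (Tset n c)))).card
      = 2 ^ (numComponents n π ρ) ∧
    (∀ S : Finset ℕ, S ⊆ nodes n → (∀ i ∈ S, ρ i ∈ S) →
      (∀ i ∈ symmDiff S (Tset n c), π i ∈ symmDiff S (Tset n c)) →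
      BalancedSubset c S) := by
  constructor
  · rw [← count_alt hπ hρ]
    set B := (nodes n).filter (fun j => c j = true) with hBdef
    have hBV : B ⊆ nodes n := Finset.filter_subset _ _
    have hsd : ∀ S : Finset ℕ, S ⊆ nodes n → symmDiff S B ⊆ nodes n := by
      intro S hS i hi
      rw [Finset.mem_symmDiff] at hi
      rcases hi with ⟨h1, _⟩ | ⟨h1, _⟩
      · exact hS h1
      · exact hBV h1
    apply Finset.card_bij' (i := fun S _ => symmDiff S B) (j := fun U _ => symmDiff U B)
    · intro S hS
      simp only [Finset.mem_filter, Finset.mem_powerset] at hS ⊢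
      refine ⟨hsd S hS.1, ?_⟩
      exact (sol_iff hπ hπoe hρ hρbw hS.1).mp hS.2
    · intro U hU
      simp only [Finset.mem_filter, Finset.mem_powerset] at hU ⊢
      have hUB : symmDiff U B ⊆ nodes n := hsd U hU.1
      refine ⟨hUB, ?_⟩
      have := (sol_iff hπ hπoe hρ hρbw (c := c) hUB)
      rw [symmDiff_symmDiff_cancel_right] at this
      exact this.mpr hU.2
    · intro S _
      exact symmDiff_symmDiff_cancel_right B S
    · intro U _
      exact symmDiff_symmDiff_cancel_right B U
  · intro S hS hinv _
    exact balanced_of_inv hρ hρbw hS hinv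


end DD
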